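/- The backward (smoothing) recursion is correct: assume the likelihood Z := Σ_{σ ∈ S^L} P_θ(σ,x) is positive, and for 2 ≤ i ≤ L define the smoothing probability δ_i(s,t) := (1/Z) Σ_{σ ∈ S^L, σ_{i-1}=s, σ_i=t} P_θ(σ,x) and the marginal posterior φ_i(t) := (1/Z) Σ_{σ ∈ S^L, σ_i=t} P_θ(σ,x). Then for every 2 ≤ i ≤ L and all states s, t with α_i(t) > 0 (where α_i(t) = a_i(t)/Σ_u b_{i-1}(u) and β_{i-1}(s) = b_{i-1}(s)/Σ_u b_{i-1}(u)), one has δ_i(s,t) = T(s,t) · (β_{i-1}(s)/α_i(t)) · φ_i(t). -/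

import Mathlib

open Finset

/-- The forward quantity `a_i(s)`: `fwd π T E x i s` is the paper's `a_{i+1}(s)`. -/
noncomputable def fwd {S X : Type*} [Fintype S] [DecidableEq S]
    (π : S → ℝ) (T : S → S → ℝ) (E : X → S → ℝ) (x : ℕ → X) (i : ℕ) (s : S) : ℝ :=
  ∑ σ : Fin (i + 1) → S,
    if σ (Fin.last i) = s then
      π (σ 0) * (∏ j : Fin i, T (σ j.castSucc) (σ j.succ)) *
        ∏ j : Fin i, E (x j) (σ j.castSucc)
    else 0

/-- The joint probability `P_θ(σ,x)` of a hidden Markov model of length `n+1`. -/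
noncomputable def joint {S X : Type*} (π : S → ℝ) (T : S → S → ℝ) (E : X → S → ℝ)
    (x : ℕ → X) (n : ℕ) (σ : Fin (n + 1) → S) : ℝ :=
  π (σ 0) * (∏ j : Fin n, T (σ j.castSucc) (σ j.succ)) *
    ∏ j : Fin (n + 1), E (x j) (σ j)

section Aux
set_option linter.unusedSectionVars false

variable {S X : Type*} [Fintype S] [DecidableEq S]
  (π : S → ℝ) (T : S → S → ℝ) (E : X → S → ℝ) (x : ℕ → X)

/-- prefix weight: emissions 0..k included -/
noncomputable def pref (k : ℕ) (p : Fin (k+1) → S) : ℝ :=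
  π (p 0) * (∏ j : Fin k, T (p j.castSucc) (p j.succ)) * ∏ j : Fin (k+1), E (x j) (p j)

/-- suffix weight -/
noncomputable def suf (k m : ℕ) (q : Fin (m+1) → S) : ℝ :=
  (∏ j : Fin m, T (q j.castSucc) (q j.succ)) * ∏ j : Fin (m+1), E (x (k+1+j)) (q j)

lemma append_apply_left {k m : ℕ} (p : Fin (k+1) → S) (q : Fin (m+1) → S)
    (i : Fin ((k+1)+(m+1))) (h : (i:ℕ) < k+1) :
    Fin.append p q i = p ⟨i, h⟩ := by
  obtain ⟨v, hv⟩ := i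
  exact Fin.append_left p q ⟨v, h⟩

lemma append_apply_right {k m : ℕ} (p : Fin (k+1) → S) (q : Fin (m+1) → S)
    (i : Fin ((k+1)+(m+1))) (v : ℕ) (h : v < m+1) (hv : (i:ℕ) = k+1+v) :
    Fin.append p q i = q ⟨v, h⟩ := by
  obtain ⟨w, hw⟩ := i
  subst hv
  exact Fin.append_right p q ⟨v, h⟩

lemma joint_append (k m : ℕ) (p : Fin (k+1) → S) (q : Fin (m+1) → S) :
    joint π T E x (k+1+m) (Fin.append p q : Fin ((k+1)+(m+1)) → S) =
      pref π T E x k p * T (p (Fin.last k)) (q 0) * suf T E x k m q := by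
  have htrans : (∏ j : Fin (k+1+m), T (Fin.append p q j.castSucc) (Fin.append p q j.succ))
      = ((∏ j : Fin (k+1), T (Fin.append p q (Fin.castAdd m j).castSucc)
            (Fin.append p q (Fin.castAdd m j).succ)) *
         ∏ j : Fin m, T (Fin.append p q (Fin.natAdd (k+1) j).castSucc)
            (Fin.append p q (Fin.natAdd (k+1) j).succ)) :=
    Fin.prod_univ_add (a := k+1) (b := m) _
  have hem : (∏ j : Fin (k+1+m+1), E (x j) (Fin.append p q j))
      = ((∏ j : Fin (k+1), E (x (Fin.castAdd (m+1) j)) (Fin.append p q (Fin.castAdd (m+1) j))) *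
         ∏ j : Fin (m+1), E (x (Fin.natAdd (k+1) j)) (Fin.append p q (Fin.natAdd (k+1) j))) :=
    Fin.prod_univ_add (a := k+1) (b := m+1) _
  have h0 : Fin.append p q (0 : Fin (k+1+m+1)) = p 0 := by
    rw [append_apply_left p q _ (by simp)]
    exact congrArg p (Fin.ext (by simp))
  rw [joint, htrans, hem, h0]
  rw [Fin.prod_univ_castSucc
    (f := fun j : Fin (k+1) => T (Fin.append p q (Fin.castAdd m j).castSucc)
      (Fin.append p q (Fin.castAdd m j).succ))]
  have t1 : (∏ j : Fin k, T (Fin.append p q (Fin.castAdd m j.castSucc).castSucc)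
        (Fin.append p q (Fin.castAdd m j.castSucc).succ))
      = ∏ j : Fin k, T (p j.castSucc) (p j.succ) := by
    refine Finset.prod_congr rfl fun j _ => ?_
    rw [append_apply_left p q _ (by simp only [Fin.coe_castSucc, Fin.coe_castAdd, Fin.val_succ, Fin.coe_natAdd, Fin.val_last]; omega), append_apply_left p q _ (by simp only [Fin.coe_castSucc, Fin.coe_castAdd, Fin.val_succ, Fin.coe_natAdd, Fin.val_last]; omega)]
    exact congrArg₂ T (congrArg p (Fin.ext (by simp))) (congrArg p (Fin.ext (by simp)))
  have t2 : T (Fin.append p q (Fin.castAdd m (Fin.last k)).castSucc)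
        (Fin.append p q (Fin.castAdd m (Fin.last k)).succ) = T (p (Fin.last k)) (q 0) := by
    rw [append_apply_left p q _ (by simp), append_apply_right p q _ 0 (by omega) (by simp)]
    exact congrArg₂ T (congrArg p (Fin.ext (by simp))) (congrArg q (Fin.ext (by simp)))
  have t3 : (∏ j : Fin m, T (Fin.append p q (Fin.natAdd (k+1) j).castSucc)
        (Fin.append p q (Fin.natAdd (k+1) j).succ))
      = ∏ j : Fin m, T (q j.castSucc) (q j.succ) := by
    refine Finset.prod_congr rfl fun j _ => ?_
    rw [append_apply_right p q _ j (by omega) (by simp),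
        append_apply_right p q _ (j+1) (by omega) (by simp only [Fin.coe_castSucc, Fin.coe_castAdd, Fin.val_succ, Fin.coe_natAdd, Fin.val_last]; omega)]
    exact congrArg₂ T (congrArg q (Fin.ext (by simp))) (congrArg q (Fin.ext (by simp)))
  have t4 : (∏ j : Fin (k+1), E (x (Fin.castAdd (m+1) j)) (Fin.append p q (Fin.castAdd (m+1) j)))
      = ∏ j : Fin (k+1), E (x j) (p j) := by
    refine Finset.prod_congr rfl fun j _ => ?_
    rw [Fin.append_left]
    simp
  have t5 : (∏ j : Fin (m+1), E (x (Fin.natAdd (k+1) j)) (Fin.append p q (Fin.natAdd (k+1) j)))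
      = ∏ j : Fin (m+1), E (x (k+1+j)) (q j) := by
    refine Finset.prod_congr rfl fun j _ => ?_
    rw [Fin.append_right]
    simp
  rw [t1, t2, t3, t4, t5, pref, suf]
  ring

lemma sum_append (k m : ℕ) (F : (Fin (k+1+m+1) → S) → ℝ) :
    ∑ σ : Fin (k+1+m+1) → S, F σ =
      ∑ p : Fin (k+1) → S, ∑ q : Fin (m+1) → S,
        F (Fin.append p q : Fin ((k+1)+(m+1)) → S) := by
  have h1 : (∑ pq : (Fin (k+1) → S) × (Fin (m+1) → S), F (Fin.appendEquiv (k+1) (m+1) pq))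
      = ∑ σ : Fin (k+1+m+1) → S, F σ := Equiv.sum_comp _ F
  rw [← h1, Fintype.sum_prod_type]
  exact Finset.sum_congr rfl fun p _ => Finset.sum_congr rfl fun q _ => rfl

lemma sum_snoc {N : ℕ} (F : (Fin (N+1) → S) → ℝ) :
    ∑ σ : Fin (N+1) → S, F σ = ∑ p : Fin N → S, ∑ u : S, F (Fin.snoc p u) := by
  have h1 : (∑ up : S × (Fin N → S), F (Fin.snocEquiv (fun _ : Fin (N+1) => S) up))
      = ∑ σ : Fin (N+1) → S, F σ := Equiv.sum_comp _ F
  rw [← h1, Fintype.sum_prod_type]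
  rw [Finset.sum_comm]
  exact Finset.sum_congr rfl fun p _ => Finset.sum_congr rfl fun u _ => rfl

lemma sum_pref (k : ℕ) (s : S) :
    (∑ p : Fin (k+1) → S, if p (Fin.last k) = s then pref π T E x k p else 0)
      = fwd π T E x k s * E (x k) s := by
  rw [fwd, Finset.sum_mul]
  refine Finset.sum_congr rfl fun p _ => ?_
  split_ifs with h
  · rw [pref, Fin.prod_univ_castSucc (f := fun j : Fin (k+1) => E (x j) (p j)), h]
    simp only [Fin.coe_castSucc, Fin.val_last]
    ring
  · simp

lemma fwd_succ (k : ℕ) (t : S) :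
    fwd π T E x (k+1) t = ∑ p : Fin (k+1) → S, pref π T E x k p * T (p (Fin.last k)) t := by
  rw [fwd, sum_snoc]
  refine Finset.sum_congr rfl fun p _ => ?_
  simp only [Fin.snoc_last]
  rw [Finset.sum_ite_eq' Finset.univ t]
  simp only [Finset.mem_univ, if_true]
  have h0 : (Fin.snoc p t : Fin (k+2) → S) 0 = p 0 := by
    have h : (0 : Fin (k+2)) = (0 : Fin (k+1)).castSucc := by ext; simp
    rw [h, Fin.snoc_castSucc]
  have htr : (∏ j : Fin (k+1), T ((Fin.snoc p t : Fin (k+2) → S) j.castSucc)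
        ((Fin.snoc p t : Fin (k+2) → S) j.succ))
      = (∏ j : Fin k, T (p j.castSucc) (p j.succ)) * T (p (Fin.last k)) t := by
    rw [Fin.prod_univ_castSucc (f := fun j : Fin (k+1) =>
      T ((Fin.snoc p t : Fin (k+2) → S) j.castSucc) ((Fin.snoc p t : Fin (k+2) → S) j.succ))]
    congr 1
    · refine Finset.prod_congr rfl fun j _ => ?_
      rw [Fin.snoc_castSucc, Fin.succ_castSucc, Fin.snoc_castSucc]
    · rw [Fin.snoc_castSucc, Fin.succ_last, Fin.snoc_last]
  have hem : (∏ j : Fin (k+1), E (x j) ((Fin.snoc p t : Fin (k+2) → S) j.castSucc))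
      = ∏ j : Fin (k+1), E (x j) (p j) := by
    refine Finset.prod_congr rfl fun j _ => ?_
    rw [Fin.snoc_castSucc]
  rw [h0, htr, hem, pref]
  ring

lemma fwd_nonneg (hπ0 : ∀ s, 0 ≤ π s) (hT0 : ∀ s t, 0 ≤ T s t) (hE0 : ∀ x s, 0 ≤ E x s)
    (i : ℕ) (s : S) : 0 ≤ fwd π T E x i s := by
  refine Finset.sum_nonneg fun σ _ => ?_
  split_ifs
  · exact mul_nonneg (mul_nonneg (hπ0 _) (Finset.prod_nonneg fun j _ => hT0 _ _))
      (Finset.prod_nonneg fun j _ => hE0 _ _)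
  · exact le_refl 0

end Aux

/-- The backward (smoothing) recursion is correct: assume the likelihood
`Z := Σ_{σ ∈ S^L} P_θ(σ,x)` is positive.  For `2 ≤ i ≤ L` (the paper's `i` is `k+2`
with `k < n`, `L = n+1`; positions `i-1, i` are the `Fin` indices `k, k+1`), define
`δ_i(s,t) := (1/Z) Σ_{σ, σ_{i-1}=s, σ_i=t} P_θ(σ,x)` and
`φ_i(t) := (1/Z) Σ_{σ, σ_i=t} P_θ(σ,x)`.  Then for all states `s, t` with
`α_i(t) > 0` (where `α_i(t) = a_i(t)/Σ_u b_{i-1}(u)` and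
`β_{i-1}(s) = b_{i-1}(s)/Σ_u b_{i-1}(u)`), one has
`δ_i(s,t) = T(s,t) · (β_{i-1}(s)/α_i(t)) · φ_i(t)`. -/
theorem hmm_smoothing_recursion {S X : Type*} [Fintype S] [DecidableEq S] [Fintype X]
    (π : S → ℝ) (T : S → S → ℝ) (E : X → S → ℝ)
    (hπ0 : ∀ s, 0 ≤ π s) (hπ1 : ∑ s, π s = 1)
    (hT0 : ∀ s t, 0 ≤ T s t) (hT1 : ∀ s, ∑ t, T s t = 1)
    (hE0 : ∀ x s, 0 ≤ E x s) (hE1 : ∀ s, ∑ x, E x s = 1)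
    (n : ℕ) (x : ℕ → X)
    (hZ : 0 < ∑ σ : Fin (n + 1) → S, joint π T E x n σ)
    (k : ℕ) (hk : k < n) (s t : S)
    (hα : 0 < fwd π T E x (k + 1) t / ∑ u, fwd π T E x k u * E (x k) u) :
    (1 / ∑ σ : Fin (n + 1) → S, joint π T E x n σ) *
        (∑ σ : Fin (n + 1) → S,
          if σ ⟨k, by omega⟩ = s ∧ σ ⟨k + 1, by omega⟩ = t then joint π T E x n σ else 0) =
      T s t *
        ((fwd π T E x k s * E (x k) s / ∑ u, fwd π T E x k u * E (x k) u) /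
          (fwd π T E x (k + 1) t / ∑ u, fwd π T E x k u * E (x k) u)) *
        ((1 / ∑ σ : Fin (n + 1) → S, joint π T E x n σ) *
          ∑ σ : Fin (n + 1) → S,
            if σ ⟨k + 1, by omega⟩ = t then joint π T E x n σ else 0) := by
  obtain ⟨m, rfl⟩ : ∃ m, n = k + 1 + m := ⟨n - (k + 1), by omega⟩
  set B := ∑ u, fwd π T E x k u * E (x k) u with hBdef
  have hB0 : 0 ≤ B :=
    Finset.sum_nonneg fun u _ =>
      mul_nonneg (fwd_nonneg π T E x hπ0 hT0 hE0 k u) (hE0 _ _)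
  have hA0 : 0 ≤ fwd π T E x (k + 1) t := fwd_nonneg π T E x hπ0 hT0 hE0 _ _
  have hBpos : 0 < B := by
    rcases hB0.lt_or_eq with h | h
    · exact h
    · rw [← h, div_zero] at hα
      exact absurd hα (lt_irrefl 0)
  have hApos : 0 < fwd π T E x (k + 1) t := by
    have h := div_mul_cancel₀ (fwd π T E x (k + 1) t) hBpos.ne'
    rw [← h]
    exact mul_pos hα hBpos
  set Back := ∑ q : Fin (m + 1) → S, if q 0 = t then suf T E x k m q else 0 with hBackdef
  have hδ : ∀ (h1 : k < k + 1 + m + 1) (h2 : k + 1 < k + 1 + m + 1),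
      (∑ σ : Fin (k + 1 + m + 1) → S,
          if σ ⟨k, h1⟩ = s ∧ σ ⟨k + 1, h2⟩ = t then joint π T E x (k + 1 + m) σ else 0)
        = (fwd π T E x k s * E (x k) s) * (T s t * Back) := by
    intro h1 h2
    rw [sum_append k m (fun σ =>
      if σ ⟨k, h1⟩ = s ∧ σ ⟨k + 1, h2⟩ = t then joint π T E x (k + 1 + m) σ else 0)]
    have step : ∀ (p : Fin (k + 1) → S) (q : Fin (m + 1) → S),
        (if (Fin.append p q : Fin ((k+1)+(m+1)) → S) ⟨k, h1⟩ = s ∧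
            (Fin.append p q : Fin ((k+1)+(m+1)) → S) ⟨k + 1, h2⟩ = t then
          joint π T E x (k + 1 + m) (Fin.append p q : Fin ((k+1)+(m+1)) → S) else 0)
        = (if p (Fin.last k) = s then pref π T E x k p else 0) *
            (T s t * (if q 0 = t then suf T E x k m q else 0)) := by
      intro p q
      have e1 : (Fin.append p q : Fin ((k+1)+(m+1)) → S) ⟨k, h1⟩ = p (Fin.last k) := by
        rw [append_apply_left p q _ (Nat.lt_succ_self k)]
        exact congrArg p (Fin.ext (by simp))
      have e2 : (Fin.append p q : Fin ((k+1)+(m+1)) → S) ⟨k + 1, h2⟩ = q 0 := by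
        rw [append_apply_right p q _ 0 (Nat.succ_pos m) rfl]
        exact congrArg q (Fin.ext (by simp))
      rw [e1, e2, joint_append]
      by_cases hc1 : p (Fin.last k) = s <;> by_cases hc2 : q 0 = t <;>
        simp [hc1, hc2] <;> ring
    calc (∑ p : Fin (k + 1) → S, ∑ q : Fin (m + 1) → S,
            if (Fin.append p q : Fin ((k+1)+(m+1)) → S) ⟨k, h1⟩ = s ∧
              (Fin.append p q : Fin ((k+1)+(m+1)) → S) ⟨k + 1, h2⟩ = t then
              joint π T E x (k + 1 + m) (Fin.append p q : Fin ((k+1)+(m+1)) → S) else 0)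
        = ∑ p : Fin (k + 1) → S, ∑ q : Fin (m + 1) → S,
            (if p (Fin.last k) = s then pref π T E x k p else 0) *
              (T s t * (if q 0 = t then suf T E x k m q else 0)) :=
          Finset.sum_congr rfl fun p _ => Finset.sum_congr rfl fun q _ => step p q
      _ = (fwd π T E x k s * E (x k) s) * (T s t * Back) := by
          simp only [← Finset.mul_sum, ← Finset.sum_mul]
          rw [sum_pref]
  have hφ : ∀ (h2 : k + 1 < k + 1 + m + 1),
      (∑ σ : Fin (k + 1 + m + 1) → S,
          if σ ⟨k + 1, h2⟩ = t then joint π T E x (k + 1 + m) σ else 0)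
        = fwd π T E x (k + 1) t * Back := by
    intro h2
    rw [sum_append k m (fun σ =>
      if σ ⟨k + 1, h2⟩ = t then joint π T E x (k + 1 + m) σ else 0)]
    have step : ∀ (p : Fin (k + 1) → S) (q : Fin (m + 1) → S),
        (if (Fin.append p q : Fin ((k+1)+(m+1)) → S) ⟨k + 1, h2⟩ = t then
          joint π T E x (k + 1 + m) (Fin.append p q : Fin ((k+1)+(m+1)) → S) else 0)
        = (pref π T E x k p * T (p (Fin.last k)) t) *
            (if q 0 = t then suf T E x k m q else 0) := by
      intro p q
      have e2 : (Fin.append p q : Fin ((k+1)+(m+1)) → S) ⟨k + 1, h2⟩ = q 0 := by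
        rw [append_apply_right p q _ 0 (Nat.succ_pos m) rfl]
        exact congrArg q (Fin.ext (by simp))
      rw [e2, joint_append]
      by_cases hc2 : q 0 = t <;> simp [hc2] <;> ring
    calc (∑ p : Fin (k + 1) → S, ∑ q : Fin (m + 1) → S,
            if (Fin.append p q : Fin ((k+1)+(m+1)) → S) ⟨k + 1, h2⟩ = t then
              joint π T E x (k + 1 + m) (Fin.append p q : Fin ((k+1)+(m+1)) → S) else 0)
        = ∑ p : Fin (k + 1) → S, ∑ q : Fin (m + 1) → S,
            (pref π T E x k p * T (p (Fin.last k)) t) *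
              (if q 0 = t then suf T E x k m q else 0) :=
          Finset.sum_congr rfl fun p _ => Finset.sum_congr rfl fun q _ => step p q
      _ = fwd π T E x (k + 1) t * Back := by
          simp only [← Finset.mul_sum, ← Finset.sum_mul]
          rw [← fwd_succ]
  rw [hδ, hφ]
  field_simp
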